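/- Let u be the positive radial solution of -(r^{N-1}u')' = r^{N-1+α}u^p on (0,1) with u'(0)=0, u(1)=0, and 0 < α. Define g(r) = r^{1+α} u(r)^p / ((N+α)(-u'(r))). Then at every interior critical point r̂ ∈ (0,1) of g one has g(r̂) = 1 - p r̂ (-u'(r̂)) / ((N+α) u(r̂)) < 1; consequently 0 < g(r) < 1 for all r ∈ (0,1). -/

import Mathlib

open Set

theorem stmt_8 (N : ℕ) (hN : 3 ≤ N) (α p : ℝ) (hα : 0 < α) (hp : 1 < p)
    (hpα : p < ((N : ℝ) + 2 + 2 * α) / ((N : ℝ) - 2))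
    (u : ℝ → ℝ) (hu : ContDiff ℝ 2 u)
    (hODE : ∀ r ∈ Ioo (0:ℝ) 1,
      deriv (fun s => s ^ ((N:ℝ) - 1) * deriv u s) r = -(r ^ ((N:ℝ) - 1 + α) * u r ^ p))
    (hu'0 : deriv u 0 = 0) (hu1 : u 1 = 0)
    (hupos : ∀ r ∈ Ico (0:ℝ) 1, 0 < u r) :
    let g : ℝ → ℝ := fun r => r ^ (1 + α) * u r ^ p / (((N : ℝ) + α) * (-(deriv u r)))
    (∀ r ∈ Ioo (0:ℝ) 1, deriv g r = 0 →
      g r = 1 - p * r * (-(deriv u r)) / (((N : ℝ) + α) * u r) ∧ g r < 1) ∧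
    ∀ r ∈ Ioo (0:ℝ) 1, 0 < g r ∧ g r < 1 := by
  intro g
  have hN3 : (3:ℝ) ≤ (N:ℝ) := by exact_mod_cast hN
  have hNα : (0:ℝ) < (N:ℝ) + α := by linarith
  -- differentiability facts
  have h1 : ContDiff ℝ (1+1) u := by exact_mod_cast hu
  rw [contDiff_succ_iff_deriv] at h1
  have hud : Differentiable ℝ u := h1.1
  have hud2 : Differentiable ℝ (deriv u) := h1.2.2.differentiable one_ne_zero
  have hudc : Continuous (deriv u) := hud2.continuous
  -- F = r^{N-1} u'
  set F : ℝ → ℝ := fun s => s ^ ((N:ℝ) - 1) * deriv u s with hFdef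
  have hrpowc : ∀ c : ℝ, 0 ≤ c → Continuous (fun s : ℝ => s ^ c) := by
    intro c hc
    exact continuous_iff_continuousAt.mpr fun x => Real.continuousAt_rpow_const x c (Or.inr hc)
  have hFcont : Continuous F := ((hrpowc _ (by linarith)).mul hudc)
  have hF0 : F 0 = 0 := by
    simp only [hFdef]
    rw [Real.zero_rpow (by linarith : (N:ℝ) - 1 ≠ 0)]
    ring
  -- F < 0 on (0,1)
  have hFanti : StrictAntiOn F (Icc (0:ℝ) 1) := by
    apply strictAntiOn_of_deriv_neg (convex_Icc 0 1) hFcont.continuousOn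
    intro x hx
    rw [interior_Icc] at hx
    rw [hODE x hx]
    have h1 : 0 < x ^ ((N:ℝ) - 1 + α) := Real.rpow_pos_of_pos hx.1 _
    have h2 : 0 < u x ^ p := Real.rpow_pos_of_pos (hupos x ⟨le_of_lt hx.1, hx.2⟩) _
    nlinarith
  have hFneg : ∀ r ∈ Ioo (0:ℝ) 1, F r < 0 := by
    intro r hr
    have := hFanti (left_mem_Icc.mpr zero_le_one) ⟨le_of_lt hr.1, le_of_lt hr.2⟩ hr.1
    rw [hF0] at this; exact this
  have hu'neg : ∀ r ∈ Ioo (0:ℝ) 1, deriv u r < 0 := by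
    intro r hr
    have h1 := hFneg r hr
    have h2 : 0 < r ^ ((N:ℝ) - 1) := Real.rpow_pos_of_pos hr.1 _
    simp only [hFdef] at h1
    nlinarith
  -- derivative of F at interior points
  have hFder : ∀ r ∈ Ioo (0:ℝ) 1,
      ((N:ℝ) - 1) * r ^ ((N:ℝ) - 1 - 1) * deriv u r + r ^ ((N:ℝ) - 1) * deriv (deriv u) r
        = -(r ^ ((N:ℝ) - 1 + α) * u r ^ p) := by
    intro r hr
    have h1 : HasDerivAt (fun s : ℝ => s ^ ((N:ℝ) - 1)) (((N:ℝ) - 1) * r ^ ((N:ℝ) - 1 - 1)) r :=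
      Real.hasDerivAt_rpow_const (Or.inl (ne_of_gt hr.1))
    have h2 : HasDerivAt (deriv u) (deriv (deriv u) r) r := (hud2 r).hasDerivAt
    have h3 : HasDerivAt F (((N:ℝ) - 1) * r ^ ((N:ℝ) - 1 - 1) * deriv u r
        + r ^ ((N:ℝ) - 1) * deriv (deriv u) r) r := h1.mul h2
    rw [← h3.deriv]
    exact hODE r hr
  -- second conjunct first
  have key2 : ∀ r ∈ Ioo (0:ℝ) 1, 0 < g r ∧ g r < 1 := by
    intro r hr
    have hrpos : 0 < r := hr.1
    have hU : 0 < u r := hupos r ⟨le_of_lt hr.1, hr.2⟩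
    have hV : deriv u r < 0 := hu'neg r hr
    have hden : 0 < ((N:ℝ) + α) * (-(deriv u r)) := by nlinarith
    have hnum : 0 < r ^ (1 + α) * u r ^ p :=
      mul_pos (Real.rpow_pos_of_pos hrpos _) (Real.rpow_pos_of_pos hU _)
    constructor
    · exact div_pos hnum hden
    -- g r < 1 via the auxiliary function φ
    · set φ : ℝ → ℝ := fun s => ((N:ℝ) + α) * (-(s ^ ((N:ℝ) - 1) * deriv u s))
        - s ^ ((N:ℝ) + α) * u s ^ p with hφdef
      have hφcont : ContinuousOn φ (Icc 0 r) := by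
        apply ContinuousOn.sub
        · exact (continuous_const.mul (hFcont.neg)).continuousOn
        · apply ContinuousOn.mul ((hrpowc _ (by linarith)).continuousOn)
          apply ContinuousOn.rpow_const (hud.continuous.continuousOn)
          intro x hx
          exact Or.inl (ne_of_gt (hupos x ⟨hx.1, lt_of_le_of_lt hx.2 hr.2⟩))
      have hφmono : StrictMonoOn φ (Icc 0 r) := by
        apply strictMonoOn_of_deriv_pos (convex_Icc 0 r) hφcont
        intro x hx
        rw [interior_Icc] at hx
        have hx1 : x ∈ Ioo (0:ℝ) 1 := ⟨hx.1, lt_trans hx.2 hr.2⟩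
        have hUx : 0 < u x := hupos x ⟨le_of_lt hx.1, hx1.2⟩
        have hVx : deriv u x < 0 := hu'neg x hx1
        have hd1 : HasDerivAt (fun s : ℝ => s ^ ((N:ℝ) - 1)) (((N:ℝ) - 1) * x ^ ((N:ℝ) - 1 - 1)) x :=
          Real.hasDerivAt_rpow_const (Or.inl (ne_of_gt hx.1))
        have hd2 : HasDerivAt (deriv u) (deriv (deriv u) x) x := (hud2 x).hasDerivAt
        have hd3 : HasDerivAt (fun s : ℝ => s ^ ((N:ℝ) + α)) (((N:ℝ) + α) * x ^ ((N:ℝ) + α - 1)) x :=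
          Real.hasDerivAt_rpow_const (Or.inl (ne_of_gt hx.1))
        have hd4 : HasDerivAt (fun s : ℝ => u s ^ p)
            (deriv u x * p * u x ^ (p - 1)) x :=
          HasDerivAt.rpow_const ((hud x).hasDerivAt) (Or.inl (ne_of_gt hUx))
        have hdφ : HasDerivAt φ (((N:ℝ) + α) * (-(((N:ℝ) - 1) * x ^ ((N:ℝ) - 1 - 1) * deriv u x
            + x ^ ((N:ℝ) - 1) * deriv (deriv u) x))
            - ((((N:ℝ) + α) * x ^ ((N:ℝ) + α - 1)) * u x ^ p
              + x ^ ((N:ℝ) + α) * (deriv u x * p * u x ^ (p - 1)))) x := by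
          exact ((((hd1.mul hd2).neg).const_mul _)).sub (hd3.mul hd4)
        rw [hdφ.deriv, hFder x hx1]
        have he1 : x ^ ((N:ℝ) + α - 1) = x ^ ((N:ℝ) - 1 + α) := by congr 1; ring
        rw [he1]
        have hup : u x ^ p = u x ^ (p - 1) * u x := by
          rw [← Real.rpow_add_one (ne_of_gt hUx) (p - 1)]; congr 1; ring
        have hxp1 : 0 < x ^ ((N:ℝ) + α) := Real.rpow_pos_of_pos hx.1 _
        have hxp2 : 0 < u x ^ (p - 1) := Real.rpow_pos_of_pos hUx _
        nlinarith [mul_pos (mul_pos hxp1 hxp2) (mul_pos (by linarith : (0:ℝ) < p) (neg_pos.mpr hVx))]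
      have hφ0 : φ 0 = 0 := by
        simp only [hφdef]
        rw [Real.zero_rpow (by linarith : (N:ℝ) - 1 ≠ 0),
          Real.zero_rpow (by positivity : (N:ℝ) + α ≠ 0)]
        ring
      have hφr : 0 < φ r := by
        have := hφmono (left_mem_Icc.mpr (le_of_lt hrpos)) (right_mem_Icc.mpr (le_of_lt hrpos)) hrpos
        rwa [hφ0] at this
      -- unfold φ r and conclude
      simp only [hφdef] at hφr
      have hsplit : r ^ ((N:ℝ) + α) = r ^ ((N:ℝ) - 1) * r ^ (1 + α) := by
        rw [← Real.rpow_add hrpos]; congr 1; ring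
      have hb : 0 < r ^ ((N:ℝ) - 1) := Real.rpow_pos_of_pos hrpos _
      rw [div_lt_one hden]
      rw [hsplit] at hφr
      nlinarith
  refine ⟨?_, key2⟩
  -- first conjunct: critical points
  intro r hr hcrit
  have hrpos : 0 < r := hr.1
  have hU : 0 < u r := hupos r ⟨le_of_lt hr.1, hr.2⟩
  have hV : deriv u r < 0 := hu'neg r hr
  have hden : ((N:ℝ) + α) * (-(deriv u r)) ≠ 0 := by nlinarith
  -- derivative of g at r
  have hn1 : HasDerivAt (fun s : ℝ => s ^ (1 + α)) ((1 + α) * r ^ (1 + α - 1)) r :=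
    Real.hasDerivAt_rpow_const (Or.inl (ne_of_gt hrpos))
  have hn2 : HasDerivAt (fun s : ℝ => u s ^ p) (deriv u r * p * u r ^ (p - 1)) r :=
    HasDerivAt.rpow_const ((hud r).hasDerivAt) (Or.inl (ne_of_gt hU))
  have hdd : HasDerivAt (fun s : ℝ => ((N:ℝ) + α) * (-(deriv u s)))
      (((N:ℝ) + α) * (-(deriv (deriv u) r))) r := ((hud2 r).hasDerivAt.neg).const_mul _
  have hgd : HasDerivAt g
      ((((1 + α) * r ^ (1 + α - 1) * u r ^ p + r ^ (1 + α) * (deriv u r * p * u r ^ (p - 1)))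
          * (((N:ℝ) + α) * (-(deriv u r)))
        - r ^ (1 + α) * u r ^ p * (((N:ℝ) + α) * (-(deriv (deriv u) r))))
        / (((N:ℝ) + α) * (-(deriv u r))) ^ 2) r := (hn1.mul hn2).div hdd hden
  have hcrit' : ((1 + α) * r ^ (1 + α - 1) * u r ^ p + r ^ (1 + α) * (deriv u r * p * u r ^ (p - 1)))
          * (((N:ℝ) + α) * (-(deriv u r)))
        - r ^ (1 + α) * u r ^ p * (((N:ℝ) + α) * (-(deriv (deriv u) r))) = 0 := by
    have h0 := hgd.deriv
    rw [hcrit] at h0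
    exact (div_eq_zero_iff.mp h0.symm).resolve_right (pow_ne_zero 2 hden)
  -- abbreviations
  set U := u r with hUdef
  set V := deriv u r with hVdef
  set W := deriv (deriv u) r with hWdef
  set a := r ^ α with hadef
  set b := r ^ ((N:ℝ) - 2) with hbdef
  set c := U ^ (p - 1) with hcdef
  have ha : 0 < a := Real.rpow_pos_of_pos hrpos _
  have hb : 0 < b := Real.rpow_pos_of_pos hrpos _
  have hc : 0 < c := Real.rpow_pos_of_pos hU _
  have hE1 : r ^ (1 + α - 1) = a := by rw [hadef]; congr 1; ring
  have hE2 : r ^ (1 + α) = r * a := by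
    rw [Real.rpow_add hrpos 1 α, Real.rpow_one, hadef]
  have hE3 : r ^ ((N:ℝ) - 1) = r * b := by
    rw [show ((N:ℝ) - 1) = 1 + ((N:ℝ) - 2) by ring, Real.rpow_add hrpos, Real.rpow_one, hbdef]
  have hE4 : r ^ ((N:ℝ) - 1 - 1) = b := by rw [hbdef]; congr 1; ring
  have hE5 : r ^ ((N:ℝ) - 1 + α) = r * b * a := by
    rw [show ((N:ℝ) - 1 + α) = 1 + ((N:ℝ) - 2) + α by ring, Real.rpow_add hrpos,
      Real.rpow_add hrpos, Real.rpow_one, hadef, hbdef]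
  have hE6 : U ^ p = U * c := by
    rw [hcdef, mul_comm U (U ^ (p - 1)), ← Real.rpow_add_one (ne_of_gt hU) (p - 1)]
    congr 1; ring
  -- rewrite the ODE relation
  have hrel := hFder r hr
  rw [hE3, hE4, hE5, hE6] at hrel
  have hrel2 : r * W + ((N:ℝ) - 1) * V + r * a * U * c = 0 := by
    have hbz : b * (r * W + ((N:ℝ) - 1) * V + r * a * U * c) = 0 := by linear_combination hrel
    rcases mul_eq_zero.mp hbz with h | h
    · exact absurd h (ne_of_gt hb)
    · exact h
  rw [hE1, hE2, hE6] at hcrit'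
  have hEq : ((1 + α) * U + r * V * p) * (-V) + r * U * W = 0 := by
    have hz : (a * c * ((N:ℝ) + α)) * (((1 + α) * U + r * V * p) * (-V) + r * U * W) = 0 := by
      linear_combination hcrit'
    rcases mul_eq_zero.mp hz with h | h
    · exact absurd h (by positivity)
    · exact h
  have hkey : ((N:ℝ) + α) * U * (-V) - p * r * V ^ 2 = r * a * U ^ 2 * c := by
    linear_combination hEq - U * hrel2
  constructor
  · show r ^ (1 + α) * U ^ p / (((N:ℝ) + α) * (-V)) = 1 - p * r * (-V) / (((N:ℝ) + α) * U)
    rw [hE2, hE6]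
    have hd2 : ((N:ℝ) + α) * U ≠ 0 := by positivity
    clear hgd hcrit' hrel hrel2 hEq hn1 hn2 hdd hODE hFder hFanti hFneg hFcont hu'neg key2
    clear hrpowc hudc hud2 h1 hu hcrit hF0
    have hstep : (1:ℝ) - p * r * -V / ((↑N + α) * U)
        = ((((N:ℝ) + α) * U) - p * r * -V) / (((N:ℝ) + α) * U) := by
      rw [sub_div, div_self hd2]
    rw [hstep, div_eq_div_iff hden hd2]
    linear_combination -(((N:ℝ) + α)) * hkey
  · exact (key2 r hr).2
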